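/- Let |ψ_l⟩ = (|0⟩ + e^{2πi l a/2^n}|1⟩)/√2 for l ∈ Z_{2^n}. Applying a CNOT with a copy ψ_{l1} ⊗ ψ_{l2} (first qubit control, second target) and then measuring the second qubit in the computational basis yields, upon outcome 0, the post-measurement state of the first qubit proportional to |0⟩ + e^{2πi (l1+l2) a/2^n}|1⟩, and upon outcome 1, proportional to |0⟩ + e^{2πi (l1−l2) a/2^n}|1⟩; each outcome occurs with probability 1/2 when e^{2πi l2 a/2^{n-1}} ≠ 1, computed from the state CNOT(ψ_{l1} ⊗ ψ_{l2}). -/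

import Mathlib

open Complex

/-- Combining `ψ_{l₁} ⊗ ψ_{l₂}` (where `ψ_l = (|0⟩ + ω^l|1⟩)/√2`, `ω = e^{2πia/2^n}`) by a
CNOT (first qubit control, second target) and measuring the second qubit yields, on outcome
`0`, a first-qubit state proportional to `|0⟩ + ω^{l₁+l₂}|1⟩` and, on outcome `1`, a state
proportional to `|0⟩ + ω^{l₁-l₂}|1⟩`; each outcome has probability `1/2` when
`e^{2πil₂a/2^{n-1}} ≠ 1`. -/
theorem cnot_sieve_combination (n : ℕ) (hn : 1 ≤ n) (a l₁ l₂ : ℤ)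
    (ω : ℂ) (hω : ω = Complex.exp (2 * Real.pi * Complex.I * a / 2 ^ n))
    (ψ : ℤ → Fin 2 → ℂ)
    (hψ : ∀ l b, ψ l b = (1 / Real.sqrt 2 : ℝ) * ω ^ (l * b.val))
    (Φ : Fin 2 × Fin 2 → ℂ)
    (hΦ : ∀ p, Φ p = ψ l₁ p.1 * ψ l₂ (p.1 + p.2)) :  -- state after CNOT
    (∃ c : ℂ, c ≠ 0 ∧ ∀ b : Fin 2, Φ (b, 0) = c * ω ^ ((l₁ + l₂) * b.val)) ∧
    (∃ c : ℂ, c ≠ 0 ∧ ∀ b : Fin 2, Φ (b, 1) = c * ω ^ ((l₁ - l₂) * b.val)) ∧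
    (Complex.exp (2 * Real.pi * Complex.I * l₂ * a / 2 ^ (n - 1)) ≠ 1 →
      (∑ b : Fin 2, ‖Φ (b, 0)‖ ^ 2 = 1 / 2) ∧ (∑ b : Fin 2, ‖Φ (b, 1)‖ ^ 2 = 1 / 2)) := by
  have hω0 : ω ≠ 0 := by rw [hω]; exact Complex.exp_ne_zero _
  have hωabs : ‖ω‖ = 1 := by
    rw [hω]
    have : (2 * Real.pi * Complex.I * a / 2 ^ n : ℂ) = ((2 * Real.pi * a / 2 ^ n : ℝ) : ℂ) * Complex.I := by
      push_cast; ring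
    rw [this, Complex.norm_exp_ofReal_mul_I]
  have hs : ((1 / Real.sqrt 2 : ℝ) : ℂ) * ((1 / Real.sqrt 2 : ℝ) : ℂ) = (1/2 : ℂ) := by
    have h2 : Real.sqrt 2 * Real.sqrt 2 = 2 := Real.mul_self_sqrt (by norm_num)
    push_cast
    field_simp
    norm_cast
    linarith [h2]
  have key : (|Real.sqrt 2|⁻¹ * |Real.sqrt 2|⁻¹) ^ 2 = (1:ℝ)/4 := by
    rw [_root_.abs_of_nonneg (Real.sqrt_nonneg 2), ← mul_inv, Real.mul_self_sqrt (by norm_num)]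
    norm_num
  refine ⟨⟨1/2, by norm_num, ?_⟩,
    ⟨(1/2 : ℂ) * ω ^ l₂, mul_ne_zero (by norm_num) (zpow_ne_zero _ hω0), ?_⟩,
    fun _ => ⟨?_, ?_⟩⟩
  · intro b
    fin_cases b <;> simp [hΦ, hψ, ← hs] <;> rw [zpow_add₀ hω0] <;> ring
  · intro b
    fin_cases b <;> simp [hΦ, hψ, ← hs]
    · ring
    · have h' : ω ^ l₂ * ω ^ (l₁ - l₂) = ω ^ l₁ := by
        rw [← zpow_add₀ hω0]; congr 1; ring
      rw [← h']; ring
  · have h : ∀ b : Fin 2, ‖Φ (b, 0)‖ ^ 2 = 1/4 := by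
      intro b
      fin_cases b <;> simp [hΦ, hψ, norm_mul, norm_zpow, hωabs] <;> norm_num [key]
    rw [Fin.sum_univ_two, h, h]; norm_num
  · have h : ∀ b : Fin 2, ‖Φ (b, 1)‖ ^ 2 = 1/4 := by
      intro b
      fin_cases b <;> simp [hΦ, hψ, norm_mul, norm_zpow, hωabs] <;> norm_num [key]
    rw [Fin.sum_univ_two, h, h]; norm_num
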